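/- arXiv:1712.10163 — 4 statements merged into one kernel-verified Lean document; each statement's English description precedes it below -/
import Mathlib

section
/- The elementary symmetric polynomials e₂(z₁,…,z_K), e₃(z₁,…,z_K), …, e_K(z₁,…,z_K), viewed as polynomials in the variables z₁,…,z_{K−1} after substituting z_K = −(z₁ + ⋯ + z_{K−1}), are algebraically independent over ℝ. -/
open MvPolynomial AddMonoidAlgebra Finset Function

namespace ZeroSumEsymmAux

/-! ### Multiset esymm cons lemma -/

lemma esymm_cons {R : Type*} [CommSemiring R] (a : R) (s : Multiset R) (j : ℕ) :
    (a ::ₘ s).esymm (j + 1) = s.esymm (j + 1) + a * s.esymm j := by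
  simp only [Multiset.esymm, Multiset.powersetCard_cons, Multiset.map_add, Multiset.sum_add,
    Multiset.map_map, Function.comp_def, Multiset.prod_cons]
  rw [← Multiset.sum_map_mul_left]

lemma esymm_overflow (n : ℕ) : esymm (Fin n) ℝ (n + 1) = 0 := by
  rw [MvPolynomial.esymm, Finset.powersetCard_eq_empty.2 (by simp), Finset.sum_empty]

/-! ### The substitution -/

noncomputable def subf (n : ℕ) : Fin (n + 1) → MvPolynomial (Fin n) ℝ := fun i =>
  if h : (i : ℕ) < n then MvPolynomial.X (⟨(i : ℕ), h⟩ : Fin n)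
  else - ∑ j : Fin n, MvPolynomial.X j

lemma map_subf_univ (n : ℕ) :
    (univ : Finset (Fin (n + 1))).val.map (subf n)
      = (- ∑ j : Fin n, (X j : MvPolynomial (Fin n) ℝ)) ::ₘ
        (univ : Finset (Fin n)).val.map X := by
  rw [Fin.univ_castSuccEmb, Finset.cons_val, Multiset.map_cons, Finset.map_val,
    Multiset.map_map]
  congr 1
  · simp [subf]
  · refine Multiset.map_congr rfl fun i _ => ?_
    have : ((Fin.castSuccEmb i : Fin (n+1)) : ℕ) = (i : ℕ) := rfl
    simp only [Function.comp_apply, subf, this, dif_pos i.isLt, Fin.eta]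

lemma aeval_subf_esymm (n : ℕ) (j : ℕ) :
    aeval (subf n) (esymm (Fin (n + 1)) ℝ (j + 1)) =
      esymm (Fin n) ℝ (j + 1) - esymm (Fin n) ℝ 1 * esymm (Fin n) ℝ j := by
  rw [aeval_esymm_eq_multiset_esymm, map_subf_univ, esymm_cons,
    ← congrFun (esymm_eq_multiset_esymm (Fin n) ℝ) (j + 1),
    ← congrFun (esymm_eq_multiset_esymm (Fin n) ℝ) j, esymm_one]
  ring

/-! ### The core family and its leading terms -/

noncomputable def Qm (n : ℕ) : Fin n → MvPolynomial (Fin n) ℝ := fun k =>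
  X ⟨0, k.pos⟩ * X k -
    (if h : (k : ℕ) + 1 < n then X (⟨(k : ℕ) + 1, h⟩ : Fin n) else 0)

noncomputable def uu {n : ℕ} (k : Fin n) : Fin n →₀ ℕ :=
  Finsupp.single ⟨0, k.pos⟩ 1 + Finsupp.single k 1

lemma hadd_toLex {n : ℕ} : ∀ a b : Fin n →₀ ℕ, toLex (a + b) = toLex a + toLex b :=
  fun _ _ => rfl

lemma X_mul_X_eq {n : ℕ} (k : Fin n) :
    (X ⟨0, k.pos⟩ * X k : MvPolynomial (Fin n) ℝ) = monomial (uu k) 1 := by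
  rw [← pow_one (X (⟨0, k.pos⟩ : Fin n)), X_pow_eq_monomial, ← pow_one (X k),
    X_pow_eq_monomial, monomial_mul, one_mul, uu]

lemma lt_uu {n : ℕ} (k : Fin n) (h : (k : ℕ) + 1 < n) :
    toLex (Finsupp.single (⟨(k : ℕ) + 1, h⟩ : Fin n) 1) < toLex (uu k) := by
  rw [Finsupp.Lex.lt_iff]
  refine ⟨⟨0, k.pos⟩, fun j hj => absurd (Fin.lt_def.mp hj) (Nat.not_lt_zero _), ?_⟩
  have h1 : (Finsupp.single (⟨(k : ℕ) + 1, h⟩ : Fin n) 1) ⟨0, k.pos⟩ = 0 := by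
    rw [Finsupp.single_apply_eq_zero]
    intro hh
    exact absurd (congrArg Fin.val hh) (by simp)
  have h2 : (0 : ℕ) < uu k ⟨0, k.pos⟩ := by
    rw [uu, Finsupp.add_apply, Finsupp.single_eq_same]
    omega
  simpa [h1] using h2

lemma Qm_supDegree_monic {n : ℕ} (k : Fin n) :
    supDegree toLex (Qm n k) = toLex (uu k) ∧ Monic toLex (Qm n k) := by
  by_cases h : (k : ℕ) + 1 < n
  · have heq : Qm n k = AddMonoidAlgebra.single (uu k) 1 +
        AddMonoidAlgebra.single (Finsupp.single (⟨(k : ℕ) + 1, h⟩ : Fin n) 1) (-1 : ℝ) := by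
      rw [Qm, dif_pos h, X_mul_X_eq, sub_eq_add_neg, single_eq_monomial, single_eq_monomial,
        ← pow_one (X (⟨(k : ℕ) + 1, h⟩ : Fin n)), X_pow_eq_monomial, ← map_neg]
    have hlt : supDegree toLex (AddMonoidAlgebra.single (Finsupp.single (⟨(k : ℕ) + 1, h⟩ : Fin n) 1)
          (-1 : ℝ)) < supDegree toLex (AddMonoidAlgebra.single (uu k) (1:ℝ)) := by
      rw [supDegree_single, supDegree_single, if_neg (by norm_num), if_neg one_ne_zero]
      exact lt_uu k h
    constructor
    · rw [heq, supDegree_add_eq_left hlt, supDegree_single, if_neg one_ne_zero]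
    · rw [Monic, heq, leadingCoeff_add_eq_left hlt, leadingCoeff_single toLex.injective]
  · have heq : Qm n k = AddMonoidAlgebra.single (uu k) (1:ℝ) := by
      rw [Qm, dif_neg h, sub_zero, X_mul_X_eq, single_eq_monomial]
    constructor
    · rw [heq, supDegree_single, if_neg one_ne_zero]
    · rw [Monic, heq, leadingCoeff_single toLex.injective]

lemma monic_supDegree_prod {n : ℕ} {ι : Type*} (s : Finset ι)
    (f : ι → MvPolynomial (Fin n) ℝ) (hm : ∀ i ∈ s, Monic toLex (f i)) :
    Monic toLex (∏ i ∈ s, f i) ∧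
      supDegree toLex (∏ i ∈ s, f i) = ∑ i ∈ s, supDegree toLex (f i) := by
  classical
  induction s using Finset.cons_induction with
  | empty =>
    refine ⟨monic_one toLex.injective, ?_⟩
    rw [Finset.prod_empty, Finset.sum_empty, AddMonoidAlgebra.one_def, supDegree_single,
      if_neg one_ne_zero]
    rfl
  | cons a s ha ih =>
    obtain ⟨hM, hD⟩ := ih (fun i hi => hm i (Finset.mem_cons_of_mem hi))
    have hma := hm a (Finset.mem_cons_self a s)
    rw [Finset.prod_cons, Finset.sum_cons]
    exact ⟨hma.mul toLex.injective hadd_toLex hM,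
      by rw [hma.supDegree_mul_of_ne_zero_right toLex.injective hadd_toLex hM.ne_zero, hD]⟩

/-! ### supDegree of images of monomials -/

lemma aeval_Qm_monomial {n : ℕ} (hn : 0 < n) (t : Fin n →₀ ℕ) (c : ℝ) (hc : c ≠ 0) :
    supDegree toLex (aeval (Qm n) (monomial t c)) =
        toLex (Finsupp.single (⟨0, hn⟩ : Fin n) (t.sum fun _ m => m) + t)
      ∧ aeval (Qm n) (monomial t c) ≠ 0 := by
  have hmon : ∀ i ∈ t.support, Monic toLex (Qm n i ^ t i) :=
    fun i _ => (Qm_supDegree_monic i).2.pow hadd_toLex toLex.injective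
  obtain ⟨hM, hD⟩ := monic_supDegree_prod t.support (fun i => Qm n i ^ t i) hmon
  have haev : aeval (Qm n) (monomial t c) =
      (monomial 0 c : MvPolynomial (Fin n) ℝ) * ∏ i ∈ t.support, Qm n i ^ t i := by
    rw [aeval_monomial, algebraMap_eq, C_apply]
    rfl
  have hsing : (monomial 0 c : MvPolynomial (Fin n) ℝ) = AddMonoidAlgebra.single 0 c :=
    (single_eq_monomial _ _).symm
  have hCne : (monomial 0 c : MvPolynomial (Fin n) ℝ) ≠ 0 := by
    rw [Ne, monomial_eq_zero]
    exact hc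
  have hpow : ∀ i : Fin n, supDegree toLex (Qm n i ^ t i) = (t i) • toLex (uu i) := by
    intro i
    rw [(Qm_supDegree_monic i).2.supDegree_pow rfl hadd_toLex toLex.injective,
      (Qm_supDegree_monic i).1]
  have key : ∑ i ∈ t.support, (t i) • (uu i)
      = Finsupp.single (⟨0, hn⟩ : Fin n) (t.sum fun _ m => m) + t := by
    simp only [uu, smul_add, Finsupp.smul_single, smul_eq_mul, mul_one]
    rw [Finset.sum_add_distrib]
    congr 1
    · show (∑ x ∈ t.support, Finsupp.single (⟨0, hn⟩ : Fin n) (t x)) = _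
      rw [← Finsupp.single_finset_sum]
      rfl
    · exact t.sum_single
  have toLex_finset_sum : ∀ (sf : Finset (Fin n)) (f : Fin n → (Fin n →₀ ℕ)),
      toLex (∑ i ∈ sf, f i) = ∑ i ∈ sf, toLex (f i) := by
    intro sf f
    classical
    induction sf using Finset.cons_induction with
    | empty => rw [Finset.sum_empty, Finset.sum_empty]; rfl
    | cons a sf ha ih => rw [Finset.sum_cons, Finset.sum_cons, hadd_toLex, ih]
  have toLex_nsmul : ∀ (m : ℕ) (a : Fin n →₀ ℕ), toLex (m • a) = m • toLex a := by
    intro m a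
    induction m with
    | zero => rw [zero_smul, zero_smul]; rfl
    | succ m ih => rw [succ_nsmul, succ_nsmul, hadd_toLex, ih]
  constructor
  · rw [haev, hsing, hM.supDegree_mul_of_ne_zero_left toLex.injective hadd_toLex
        (hsing ▸ hCne), supDegree_single, if_neg hc, hD]
    have h3 : ∑ i ∈ t.support, supDegree toLex (Qm n i ^ t i)
        = ∑ i ∈ t.support, (t i) • toLex (uu i) := Finset.sum_congr rfl fun i _ => hpow i
    have h4 : toLex (∑ i ∈ t.support, (t i) • uu i)
        = ∑ i ∈ t.support, (t i) • toLex (uu i) := by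
      rw [toLex_finset_sum]
      exact Finset.sum_congr rfl fun i _ => toLex_nsmul _ _
    rw [h3, ← key, h4, show (toLex (0 : Fin n →₀ ℕ)) = 0 from rfl, zero_add]
  · rw [haev, hsing, Ne, ← leadingCoeff_eq_zero toLex.injective (p := _),
      leadingCoeff_mul toLex.injective hadd_toLex, hM, mul_one,
      leadingCoeff_single toLex.injective]
    exact hc

lemma shift_inj {n : ℕ} (hn : 0 < n) : Function.Injective
    (fun t : Fin n →₀ ℕ =>
      Finsupp.single (⟨0, hn⟩ : Fin n) (t.sum fun _ m => m) + t) := by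
  intro a b h
  simp only at h
  have hs : ∀ u : Fin n →₀ ℕ,
      (Finsupp.single (⟨0, hn⟩ : Fin n) (u.sum fun _ m => m) + u).sum (fun _ m => m)
        = (u.sum fun _ m => m) + (u.sum fun _ m => m) := by
    intro u
    rw [Finsupp.sum_add_index' (fun _ => rfl) (fun _ _ _ => rfl),
      Finsupp.sum_single_index rfl]
  have hd : (a.sum fun _ m => m) = (b.sum fun _ m => m) := by
    have h2 := congrArg (fun u : Fin n →₀ ℕ => u.sum (fun _ m => m)) h
    simp only [hs] at h2
    omega
  rw [hd] at h
  exact add_left_cancel h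

theorem Qm_algIndep (n : ℕ) : AlgebraicIndependent ℝ (Qm n) := by
  rcases Nat.eq_zero_or_pos n with rfl | hn
  · rw [algebraicIndependent_empty_type_iff]
    rw [MvPolynomial.algebraMap_eq]
    exact MvPolynomial.C_injective _ _
  · rw [algebraicIndependent_iff_injective_aeval, injective_iff_map_eq_zero]
    intro p hp
    by_contra h0
    apply absurd hp
    rw [p.as_sum, map_sum]
    refine sum_ne_zero_of_injOn_supDegree (D := toLex)
      (Finset.nonempty_iff_ne_empty.mpr (MvPolynomial.support_eq_empty.not.mpr h0)) (fun t ht => ?_) (fun t ht s hs he => ?_)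
    · exact (aeval_Qm_monomial hn t _ (MvPolynomial.mem_support_iff.mp ht)).2
    · rw [Finset.mem_coe, MvPolynomial.mem_support_iff] at ht hs
      have het := (aeval_Qm_monomial hn t _ ht).1
      have hes := (aeval_Qm_monomial hn s _ hs).1
      dsimp only [Function.comp] at he
      rw [het, hes] at he
      exact shift_inj hn (toLex.injective he)

/-! ### Independence of the elementary symmetric polynomials -/

lemma esymm_family_algIndep (n : ℕ) :
    AlgebraicIndependent ℝ (fun i : Fin n => esymm (Fin n) ℝ ((i : ℕ) + 1)) := by
  rw [algebraicIndependent_iff_injective_aeval]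
  intro a b hab
  apply esymmAlgHom_fin_injective (R := ℝ) (m := n) (n := n) le_rfl
  exact Subtype.ext (by rw [esymmAlgHom_apply, esymmAlgHom_apply]; exact hab)

lemma Qneg_algIndep (n : ℕ) : AlgebraicIndependent ℝ (fun k => -(Qm n k)) := by
  have hQm := Qm_algIndep n
  rw [algebraicIndependent_iff_injective_aeval] at hQm ⊢
  set σa : MvPolynomial (Fin n) ℝ →ₐ[ℝ] MvPolynomial (Fin n) ℝ :=
    aeval (fun i => -X i) with hσ
  have hcomp : (aeval (Qm n)).comp σa = aeval (fun k => -(Qm n k)) := by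
    rw [hσ, comp_aeval]
    congr 1
    funext i
    rw [map_neg, aeval_X]
  have e1 : ∀ x, aeval (Qm n) (σa x) = aeval (fun k => -(Qm n k)) x := by
    intro x
    rw [← hcomp]
    rfl
  have hinv : ∀ p, σa (σa p) = p := by
    intro p
    have hid : σa.comp σa = AlgHom.id ℝ _ := by
      apply MvPolynomial.algHom_ext
      intro i
      simp [hσ]
    calc σa (σa p) = (σa.comp σa) p := rfl
    _ = p := by rw [hid]; rfl
  intro a b hab
  have h1 : σa a = σa b := hQm (by rw [e1 a, e1 b]; exact hab)
  calc a = σa (σa a) := (hinv a).symm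
  _ = σa (σa b) := by rw [h1]
  _ = b := hinv b

end ZeroSumEsymmAux

/-- **Elementary symmetric polynomials remain independent on the zero-sum
hyperplane.**  With `K = n + 1` variables `z₁, …, z_K`, substitute
`z_K = −(z₁ + ⋯ + z_{K−1})`.  Then the polynomials
`e₂(z₁, …, z_K), …, e_K(z₁, …, z_K)`, viewed as polynomials in `z₁, …, z_{K−1}`,
are algebraically independent over `ℝ`. -/
theorem esymm_algebraicIndependent_on_zero_sum (n : ℕ) :
    AlgebraicIndependent ℝ (fun k : Fin n =>
      MvPolynomial.aeval
        (fun i : Fin (n + 1) =>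
          (if h : (i : ℕ) < n then MvPolynomial.X (⟨(i : ℕ), h⟩ : Fin n)
           else - ∑ j : Fin n, MvPolynomial.X j : MvPolynomial (Fin n) ℝ))
        (MvPolynomial.esymm (Fin (n + 1)) ℝ ((k : ℕ) + 2))) := by
  open ZeroSumEsymmAux in
  show AlgebraicIndependent ℝ (fun k : Fin n =>
    MvPolynomial.aeval (ZeroSumEsymmAux.subf n) (MvPolynomial.esymm (Fin (n + 1)) ℝ ((k : ℕ) + 2)))
  have hfam : (fun k : Fin n =>
        MvPolynomial.aeval (ZeroSumEsymmAux.subf n)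
          (MvPolynomial.esymm (Fin (n + 1)) ℝ ((k : ℕ) + 2)))
      = fun k : Fin n =>
          MvPolynomial.aeval (fun i : Fin n => MvPolynomial.esymm (Fin n) ℝ ((i : ℕ) + 1))
            (-(ZeroSumEsymmAux.Qm n k)) := by
    funext k
    have h1 := ZeroSumEsymmAux.aeval_subf_esymm n ((k : ℕ) + 1)
    rw [show (k : ℕ) + 2 = ((k : ℕ) + 1) + 1 from rfl, h1, map_neg, ZeroSumEsymmAux.Qm,
      map_sub, map_mul, MvPolynomial.aeval_X, MvPolynomial.aeval_X]
    by_cases h : (k : ℕ) + 1 < n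
    · rw [dif_pos h, MvPolynomial.aeval_X]
      show _ = -(MvPolynomial.esymm (Fin n) ℝ (0 + 1) * MvPolynomial.esymm (Fin n) ℝ ((k : ℕ) + 1)
        - MvPolynomial.esymm (Fin n) ℝ (((k : ℕ) + 1) + 1))
      rw [zero_add]
      ring
    · rw [dif_neg h, map_zero,
        show ((k : ℕ) + 1) + 1 = n + 1 from by omega,
        ZeroSumEsymmAux.esymm_overflow]
      show _ = -(MvPolynomial.esymm (Fin n) ℝ (0 + 1) * MvPolynomial.esymm (Fin n) ℝ ((k : ℕ) + 1)
        - 0)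
      rw [zero_add]
      ring
  rw [hfam, algebraicIndependent_iff_injective_aeval]
  have he := ZeroSumEsymmAux.esymm_family_algIndep n
  have hQ := ZeroSumEsymmAux.Qneg_algIndep n
  rw [algebraicIndependent_iff_injective_aeval] at he hQ
  have hc : MvPolynomial.aeval (fun k : Fin n =>
        MvPolynomial.aeval (fun i : Fin n => MvPolynomial.esymm (Fin n) ℝ ((i : ℕ) + 1))
          (-(ZeroSumEsymmAux.Qm n k)))
      = (MvPolynomial.aeval (fun i : Fin n => MvPolynomial.esymm (Fin n) ℝ ((i : ℕ) + 1))).comp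
          (MvPolynomial.aeval (fun k : Fin n => -(ZeroSumEsymmAux.Qm n k))) := by
    rw [MvPolynomial.comp_aeval]
  rw [hc, AlgHom.coe_comp]
  exact he.comp hQ
end

section
/- Let f₁,…,f_r ∈ ℝ[x₁,…,x_p] be algebraically independent polynomials, and let e₁,…,e_K be the elementary symmetric polynomials in K variables. Then the rK polynomials e_k(f_i(x^{(1)}),…,f_i(x^{(K)})) for 1 ≤ i ≤ r, 1 ≤ k ≤ K, in the variables x^{(1)},…,x^{(K)} (K disjoint copies of the variables x), are algebraically independent over ℝ. -/
open MvPolynomial TensorProduct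

section Aux

variable {R : Type*} [Field R]

/-- Base change of an injective `aeval` map along an `R`-algebra `B`
(flatness over the field `R`). -/
lemma aux_aeval_map_injective {ι σ B : Type*} [CommRing B] [Algebra R B]
    (v : ι → MvPolynomial σ R)
    (hv : Function.Injective (aeval v : MvPolynomial ι R →ₐ[R] MvPolynomial σ R)) :
    Function.Injective
      (aeval (fun i => MvPolynomial.map (algebraMap R B) (v i)) :
        MvPolynomial ι B →ₐ[B] MvPolynomial σ B) := by
  set φ : MvPolynomial ι R →ₐ[R] MvPolynomial σ R := aeval v with hφ
  set Ψ : B ⊗[R] MvPolynomial ι R →ₐ[B] B ⊗[R] MvPolynomial σ R :=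
    Algebra.TensorProduct.map (AlgHom.id B B) φ with hΨ
  have key :
      (aeval (fun i => MvPolynomial.map (algebraMap R B) (v i)) :
        MvPolynomial ι B →ₐ[B] MvPolynomial σ B) =
      ((algebraTensorAlgEquiv R B).toAlgHom.comp
        (Ψ.comp (algebraTensorAlgEquiv R B).symm.toAlgHom)) := by
    apply MvPolynomial.algHom_ext
    intro i
    simp [hΨ, hφ]
  have hΨinj : Function.Injective Ψ := by
    have h1 : (Ψ.toLinearMap.restrictScalars R)
        = LinearMap.lTensor B φ.toLinearMap := by
      apply TensorProduct.ext'
      intro b x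
      simp [hΨ]
    have h2 : Function.Injective (LinearMap.lTensor B φ.toLinearMap) :=
      Module.Flat.lTensor_preserves_injective_linearMap _ hv
    have h3 : ⇑Ψ = ⇑(LinearMap.lTensor B φ.toLinearMap) := by
      rw [← h1]; rfl
    rw [show (⇑Ψ : B ⊗[R] MvPolynomial ι R → B ⊗[R] MvPolynomial σ R)
        = ⇑(LinearMap.lTensor B φ.toLinearMap) from h3]
    exact h2
  rw [key]
  simp only [AlgHom.coe_comp, AlgEquiv.toAlgHom_eq_coe, AlgHom.coe_coe]
  exact ((algebraTensorAlgEquiv R B).injective.comp hΨinj).comp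
    (algebraTensorAlgEquiv R B).symm.injective

/-- Joining an independent family of polynomials (base-changed) with an independent
family of constants. -/
lemma aux_sum_blocks_indep {ι κ σ B : Type*} [CommRing B] [Algebra R B]
    (v : ι → MvPolynomial σ R) (hv : AlgebraicIndependent R v)
    (u : κ → B) (hu : AlgebraicIndependent R u) :
    AlgebraicIndependent R
      (Sum.elim (fun i => MvPolynomial.map (algebraMap R B) (v i))
        (fun k => (C (u k) : MvPolynomial σ B))) := by
  rw [algebraicIndependent_iff_injective_aeval]
  have key :
      (aeval (Sum.elim (fun i => MvPolynomial.map (algebraMap R B) (v i))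
          (fun k => (C (u k) : MvPolynomial σ B))) :
        MvPolynomial (ι ⊕ κ) R →ₐ[R] MvPolynomial σ B)
      = (((aeval (fun i => MvPolynomial.map (algebraMap R B) (v i)) :
            MvPolynomial ι B →ₐ[B] MvPolynomial σ B).restrictScalars R).comp
          ((MvPolynomial.mapAlgHom
              (aeval u : MvPolynomial κ R →ₐ[R] B)).comp
            (sumAlgEquiv R ι κ).toAlgHom)) := by
    apply MvPolynomial.algHom_ext
    rintro (i | k) <;>
      simp [MvPolynomial.algebraMap_eq, mapAlgHom_apply, aeval_C]
  rw [key]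
  simp only [AlgHom.coe_comp, AlgHom.coe_restrictScalars', AlgEquiv.toAlgHom_eq_coe,
    AlgHom.coe_coe]
  refine Function.Injective.comp ?_ (Function.Injective.comp ?_ ?_)
  · exact aux_aeval_map_injective v (algebraicIndependent_iff_injective_aeval.mp hv)
  · have : Function.Injective (aeval u : MvPolynomial κ R →ₐ[R] B) :=
      algebraicIndependent_iff_injective_aeval.mp hu
    exact
      MvPolynomial.map_injective (σ := ι) ((aeval u : MvPolynomial κ R →ₐ[R] B) : MvPolynomial κ R →+* B) this
  · exact (sumAlgEquiv R ι κ).injective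

/-- Splitting off one block. -/
def auxBlockEquiv (K : ℕ) (γ : Type*) : (γ ⊕ (Fin K × γ)) ≃ (Fin (K + 1) × γ) where
  toFun := Sum.elim (fun s => (0, s)) (fun js => (js.1.succ, js.2))
  invFun x := Fin.cases (Sum.inl x.2) (fun j => Sum.inr (j, x.2)) x.1
  left_inv := by rintro (s | ⟨j, s⟩) <;> simp
  right_inv := by
    rintro ⟨j, s⟩
    induction j using Fin.cases <;> simp

lemma aux_sumAlgEquiv_symm_map {σ τ : Type*} (q : MvPolynomial σ R) :
    (sumAlgEquiv R σ τ).symm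
        (MvPolynomial.map (algebraMap R (MvPolynomial τ R)) q) =
      rename Sum.inl q := by
  rw [AlgEquiv.symm_apply_eq]
  have := DFunLike.congr_fun (sumAlgEquiv_comp_rename_inl (R := R) (S₁ := σ) (S₂ := τ)) q
  simpa [mapAlgHom_apply, Algebra.ofId] using this.symm

lemma aux_sumAlgEquiv_symm_C {σ τ : Type*} (b : MvPolynomial τ R) :
    (sumAlgEquiv R σ τ).symm (C b) = rename Sum.inr b := by
  rw [AlgEquiv.symm_apply_eq]
  have := DFunLike.congr_fun (sumAlgEquiv_comp_rename_inr (R := R) (S₁ := σ) (S₂ := τ)) b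
  simpa [MvPolynomial.algebraMap_eq] using this.symm

/-- Disjoint copies of an algebraically independent family are jointly independent. -/
lemma aux_blocks_indep {ι σ : Type*} (K : ℕ)
    (v : ι → MvPolynomial σ R) (hv : AlgebraicIndependent R v) :
    AlgebraicIndependent R
      (fun ji : Fin K × ι =>
        (rename (Prod.mk ji.1) (v ji.2) : MvPolynomial (Fin K × σ) R)) := by
  induction K with
  | zero => exact algebraicIndependent_empty_type
  | succ K ih =>
    have h2 := aux_sum_blocks_indep v hv
      (fun ji : Fin K × ι => (rename (Prod.mk ji.1) (v ji.2) : MvPolynomial (Fin K × σ) R)) ih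
    set e : MvPolynomial σ (MvPolynomial (Fin K × σ) R) ≃ₐ[R]
        MvPolynomial (Fin (K + 1) × σ) R :=
      (sumAlgEquiv R σ (Fin K × σ)).symm.trans (renameEquiv R (auxBlockEquiv K σ)) with he
    have h3 := h2.map' (f := e.toAlgHom) e.injective
    have h4 := h3.comp (⇑(auxBlockEquiv K ι).symm) (auxBlockEquiv K ι).symm.injective
    have hfun : ((⇑e.toAlgHom ∘ Sum.elim
          (fun i => MvPolynomial.map (algebraMap R (MvPolynomial (Fin K × σ) R)) (v i))
          (fun ji : Fin K × ι => (C (rename (Prod.mk ji.1) (v ji.2)) :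
            MvPolynomial σ (MvPolynomial (Fin K × σ) R)))) ∘ ⇑(auxBlockEquiv K ι).symm)
        = (fun ji : Fin (K + 1) × ι =>
            (rename (Prod.mk ji.1) (v ji.2) : MvPolynomial (Fin (K + 1) × σ) R)) := by
      funext ji
      obtain ⟨j, i⟩ := ji
      induction j using Fin.cases with
      | zero =>
        simp only [Function.comp_apply, auxBlockEquiv, Equiv.coe_fn_symm_mk, Fin.cases_zero,
          Sum.elim_inl, he, AlgEquiv.toAlgHom_eq_coe, AlgEquiv.coe_toAlgHom, AlgHom.coe_coe, AlgEquiv.trans_apply,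
          aux_sumAlgEquiv_symm_map, renameEquiv_apply, rename_rename]
        rfl
      | succ j =>
        simp only [Function.comp_apply, auxBlockEquiv, Equiv.coe_fn_symm_mk, Fin.cases_succ,
          Sum.elim_inr, he, AlgEquiv.toAlgHom_eq_coe, AlgEquiv.coe_toAlgHom, AlgHom.coe_coe, AlgEquiv.trans_apply,
          aux_sumAlgEquiv_symm_C, renameEquiv_apply, rename_rename]
        rfl
    rw [hfun] at h4
    exact h4

end Aux

/-- The elementary symmetric polynomials `e₁, …, e_K` in `K` variables are
algebraically independent. -/
lemma aux_esymm_indep (K : ℕ) :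
    AlgebraicIndependent ℝ (fun k : Fin K => esymm (Fin K) ℝ ((k : ℕ) + 1)) := by
  rw [algebraicIndependent_iff_injective_aeval]
  intro a b hab
  apply esymmAlgHom_fin_injective (R := ℝ) (m := K) (n := K) le_rfl
  apply Subtype.val_injective
  rw [esymmAlgHom_apply, esymmAlgHom_apply]
  exact hab

/-- **Symmetrized copies of independent polynomials are independent.**
Let `f₁, …, f_r ∈ ℝ[x₁, …, x_p]` be algebraically independent, and let
`e₁, …, e_K` be the elementary symmetric polynomials in `K` variables.  Then
the `rK` polynomials `e_k(f_i(x⁽¹⁾), …, f_i(x⁽ᴷ⁾))`, `1 ≤ i ≤ r`, `1 ≤ k ≤ K`,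
in `K` disjoint blocks of variables, are algebraically independent over `ℝ`. -/
theorem esymm_of_independent_blocks_algebraicIndependent {p r K : ℕ}
    (f : Fin r → MvPolynomial (Fin p) ℝ)
    (hf : AlgebraicIndependent ℝ f) :
    AlgebraicIndependent ℝ (fun ik : Fin r × Fin K =>
      MvPolynomial.aeval
        (fun j : Fin K =>
          MvPolynomial.rename (fun a : Fin p => (j, a)) (f ik.1))
        (MvPolynomial.esymm (Fin K) ℝ ((ik.2 : ℕ) + 1))) := by
  -- the blocks of renamed `f`s are independent
  have hg0 := aux_blocks_indep K f hf
  have hg : AlgebraicIndependent ℝ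
      (fun ik : Fin r × Fin K =>
        (rename (Prod.mk ik.2) (f ik.1) : MvPolynomial (Fin K × Fin p) ℝ)) := by
    have := hg0.comp (fun ik : Fin r × Fin K => (ik.2, ik.1))
      (fun a b h => by
        obtain ⟨a1, a2⟩ := a; obtain ⟨b1, b2⟩ := b
        simpa [Prod.ext_iff, and_comm] using h)
    exact this
  -- the symmetrized block families of `esymm` are independent
  have hE := aux_blocks_indep (ι := Fin K) (σ := Fin K) r
    (fun k : Fin K => esymm (Fin K) ℝ ((k : ℕ) + 1)) (aux_esymm_indep K)
  -- compose
  have hΨinj : Function.Injective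
      (aeval (fun ik : Fin r × Fin K =>
          (rename (Prod.mk ik.2) (f ik.1) : MvPolynomial (Fin K × Fin p) ℝ)) :
        MvPolynomial (Fin r × Fin K) ℝ →ₐ[ℝ] MvPolynomial (Fin K × Fin p) ℝ) :=
    algebraicIndependent_iff_injective_aeval.mp hg
  have h5 := hE.map' (f := (aeval (fun ik : Fin r × Fin K =>
      (rename (Prod.mk ik.2) (f ik.1) : MvPolynomial (Fin K × Fin p) ℝ)) :
        MvPolynomial (Fin r × Fin K) ℝ →ₐ[ℝ] MvPolynomial (Fin K × Fin p) ℝ)) hΨinj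
  have hfun : ((aeval (fun ik : Fin r × Fin K =>
      (rename (Prod.mk ik.2) (f ik.1) : MvPolynomial (Fin K × Fin p) ℝ)) :
        MvPolynomial (Fin r × Fin K) ℝ →ₐ[ℝ] MvPolynomial (Fin K × Fin p) ℝ) ∘
      (fun ik : Fin r × Fin K =>
        (rename (Prod.mk ik.1) (esymm (Fin K) ℝ ((ik.2 : ℕ) + 1)) :
          MvPolynomial (Fin r × Fin K) ℝ)))
      = (fun ik : Fin r × Fin K =>
          MvPolynomial.aeval
            (fun j : Fin K =>
              MvPolynomial.rename (fun a : Fin p => (j, a)) (f ik.1))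
            (MvPolynomial.esymm (Fin K) ℝ ((ik.2 : ℕ) + 1))) := by
    funext ik
    simp only [Function.comp_apply, aeval_rename]
    rfl
  rw [hfun] at h5
  exact h5
end

section
/- Let G be a finite abelian group and let Ĝ be its character group. Let H = (ℤ/p)^Ĝ with p = |G| act on the rational function field ℂ(y_χ : χ ∈ Ĝ) by scaling each y_χ by p-th roots of unity. Suppose φ ∈ H, written as (φ_χ)_{χ∈Ĝ} with each φ_χ a p-th root of unity, fixes all products y_χ y_{χ⁻¹} and all products y_{χ₁} y_{χ₂} y_{(χ₁χ₂)⁻¹}. Then the map χ ↦ φ_χ is a group homomorphism Ĝ → ℂ^×; consequently the subgroup of H fixing these invariants has order exactly |G|. -/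
open MvPolynomial

/-- The action of a tuple of scalars `φ = (φ_χ)` (indexed by the characters of `G`)
on the polynomial ring `ℂ[y_χ : χ ∈ Ĝ]`, scaling each variable: `y_χ ↦ φ_χ · y_χ`. -/
noncomputable def scaleVars {G : Type*} [Group G]
    (φ : (G →* ℂˣ) → ℂˣ) (f : MvPolynomial (G →* ℂˣ) ℂ) : MvPolynomial (G →* ℂˣ) ℂ :=
  MvPolynomial.aeval (fun χ : G →* ℂˣ => ((φ χ : ℂ)) • MvPolynomial.X χ) f

lemma scaleVars_X_mul_X {G : Type*} [Group G] (ψ : (G →* ℂˣ) → ℂˣ) (a b : G →* ℂˣ) :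
    scaleVars ψ (X a * X b) = (((ψ a : ℂ)) * (ψ b : ℂ)) • (X a * X b) := by
  simp only [scaleVars, map_mul, aeval_X, smul_eq_C_mul, map_mul]
  ring

lemma scaleVars_X_mul_X_mul_X {G : Type*} [Group G] (ψ : (G →* ℂˣ) → ℂˣ) (a b c : G →* ℂˣ) :
    scaleVars ψ (X a * X b * X c) =
      (((ψ a : ℂ)) * (ψ b : ℂ) * (ψ c : ℂ)) • (X a * X b * X c) := by
  simp only [scaleVars, map_mul, aeval_X, smul_eq_C_mul, map_mul]
  ring

lemma mvpoly_smul_eq_self {σ : Type*} {c : ℂ} {P : MvPolynomial σ ℂ} (hP : P ≠ 0)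
    (h : c • P = P) : c = 1 := by
  have : (c - 1) • P = 0 := by rw [sub_smul, one_smul, h, sub_self]
  exact sub_eq_zero.mp ((smul_eq_zero.mp this).resolve_right hP)

lemma units_prod2 {G : Type*} [Group G] (ψ : (G →* ℂˣ) → ℂˣ)
    (h2 : ∀ χ : G →* ℂˣ, scaleVars ψ (X χ * X χ⁻¹) = X χ * X χ⁻¹) (χ : G →* ℂˣ) :
    ψ χ * ψ χ⁻¹ = 1 := by
  have h := h2 χ
  rw [scaleVars_X_mul_X] at h
  have hne : (X χ * X χ⁻¹ : MvPolynomial (G →* ℂˣ) ℂ) ≠ 0 :=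
    mul_ne_zero (X_ne_zero χ) (X_ne_zero χ⁻¹)
  have := mvpoly_smul_eq_self hne h
  ext
  simpa using this

lemma units_prod3 {G : Type*} [Group G] (ψ : (G →* ℂˣ) → ℂˣ)
    (h3 : ∀ χ₁ χ₂ : G →* ℂˣ,
      scaleVars ψ (X χ₁ * X χ₂ * X (χ₁ * χ₂)⁻¹) = X χ₁ * X χ₂ * X (χ₁ * χ₂)⁻¹)
    (χ₁ χ₂ : G →* ℂˣ) : ψ χ₁ * ψ χ₂ * ψ (χ₁ * χ₂)⁻¹ = 1 := by
  have h := h3 χ₁ χ₂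
  rw [scaleVars_X_mul_X_mul_X] at h
  have hne : (X χ₁ * X χ₂ * X (χ₁ * χ₂)⁻¹ : MvPolynomial (G →* ℂˣ) ℂ) ≠ 0 :=
    mul_ne_zero (mul_ne_zero (X_ne_zero _) (X_ne_zero _)) (X_ne_zero _)
  have := mvpoly_smul_eq_self hne h
  ext
  simpa using this

lemma mult_of_fix {G : Type*} [Group G] (ψ : (G →* ℂˣ) → ℂˣ)
    (h2 : ∀ χ : G →* ℂˣ, scaleVars ψ (X χ * X χ⁻¹) = X χ * X χ⁻¹)
    (h3 : ∀ χ₁ χ₂ : G →* ℂˣ,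
      scaleVars ψ (X χ₁ * X χ₂ * X (χ₁ * χ₂)⁻¹) = X χ₁ * X χ₂ * X (χ₁ * χ₂)⁻¹)
    (χ₁ χ₂ : G →* ℂˣ) : ψ (χ₁ * χ₂) = ψ χ₁ * ψ χ₂ := by
  have k2 := units_prod2 ψ h2 (χ₁ * χ₂)
  have k3 := units_prod3 ψ h3 χ₁ χ₂
  calc ψ (χ₁ * χ₂) = ψ (χ₁ * χ₂) * (ψ χ₁ * ψ χ₂ * ψ (χ₁ * χ₂)⁻¹) := by rw [k3, mul_one]
    _ = (ψ (χ₁ * χ₂) * ψ (χ₁ * χ₂)⁻¹) * (ψ χ₁ * ψ χ₂) := by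
          simp only [mul_comm, mul_assoc, mul_left_comm]
    _ = ψ χ₁ * ψ χ₂ := by rw [k2, one_mul]

/-- **Automorphisms fixing the degree-2 and degree-3 invariants form the dual group.**
Let `G` be a finite abelian group of order `p` with character group `Ĝ`, and let
`φ ∈ (ℤ/p)^Ĝ` (i.e. each `φ_χ` is a `p`-th root of unity) act on `ℂ(y_χ : χ ∈ Ĝ)`
by scaling variables.  If `φ` fixes all products `y_χ y_{χ⁻¹}` and all products
`y_{χ₁} y_{χ₂} y_{(χ₁χ₂)⁻¹}`, then `χ ↦ φ_χ` is a group homomorphism `Ĝ → ℂˣ`;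
consequently the subgroup of such `φ` has order exactly `|G|`. -/
theorem fixing_invariants_is_dual_group {G : Type*} [CommGroup G] [Fintype G]
    (φ : (G →* ℂˣ) → ℂˣ)
    (hroot : ∀ χ : G →* ℂˣ, φ χ ^ Fintype.card G = 1)
    (hfix2 : ∀ χ : G →* ℂˣ,
      scaleVars φ (MvPolynomial.X χ * MvPolynomial.X χ⁻¹) =
        MvPolynomial.X χ * MvPolynomial.X χ⁻¹)
    (hfix3 : ∀ χ₁ χ₂ : G →* ℂˣ,
      scaleVars φ (MvPolynomial.X χ₁ * MvPolynomial.X χ₂ * MvPolynomial.X (χ₁ * χ₂)⁻¹) =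
        MvPolynomial.X χ₁ * MvPolynomial.X χ₂ * MvPolynomial.X (χ₁ * χ₂)⁻¹) :
    (∀ χ₁ χ₂ : G →* ℂˣ, φ (χ₁ * χ₂) = φ χ₁ * φ χ₂) ∧
    Nat.card {ψ : (G →* ℂˣ) → ℂˣ //
      (∀ χ : G →* ℂˣ, ψ χ ^ Fintype.card G = 1) ∧
      (∀ χ : G →* ℂˣ,
        scaleVars ψ (MvPolynomial.X χ * MvPolynomial.X χ⁻¹) =
          MvPolynomial.X χ * MvPolynomial.X χ⁻¹) ∧
      (∀ χ₁ χ₂ : G →* ℂˣ,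
        scaleVars ψ (MvPolynomial.X χ₁ * MvPolynomial.X χ₂ * MvPolynomial.X (χ₁ * χ₂)⁻¹) =
          MvPolynomial.X χ₁ * MvPolynomial.X χ₂ * MvPolynomial.X (χ₁ * χ₂)⁻¹)} =
      Fintype.card G := by
  refine ⟨mult_of_fix φ hfix2 hfix3, ?_⟩
  -- The subtype is in bijection with `(G →* ℂˣ) →* ℂˣ`.
  have hpow : ∀ χ : G →* ℂˣ, χ ^ Fintype.card G = 1 := by
    intro χ
    ext g
    simp [← map_pow, pow_card_eq_one]
  let e : {ψ : (G →* ℂˣ) → ℂˣ //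
      (∀ χ : G →* ℂˣ, ψ χ ^ Fintype.card G = 1) ∧
      (∀ χ : G →* ℂˣ,
        scaleVars ψ (MvPolynomial.X χ * MvPolynomial.X χ⁻¹) =
          MvPolynomial.X χ * MvPolynomial.X χ⁻¹) ∧
      (∀ χ₁ χ₂ : G →* ℂˣ,
        scaleVars ψ (MvPolynomial.X χ₁ * MvPolynomial.X χ₂ * MvPolynomial.X (χ₁ * χ₂)⁻¹) =
          MvPolynomial.X χ₁ * MvPolynomial.X χ₂ * MvPolynomial.X (χ₁ * χ₂)⁻¹)} ≃
      ((G →* ℂˣ) →* ℂˣ) :=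
    { toFun := fun ψ => MonoidHom.mk' (fun χ => ψ.1 χ) (mult_of_fix ψ.1 ψ.2.2.1 ψ.2.2.2)
      invFun := fun f => ⟨fun χ => f χ, by
        refine ⟨fun χ => ?_, fun χ => ?_, fun χ₁ χ₂ => ?_⟩
        · rw [← map_pow, hpow, map_one]
        · rw [scaleVars_X_mul_X]
          have h1 : f χ * f χ⁻¹ = 1 := by
            have hc : χ * χ⁻¹ = 1 := mul_inv_cancel χ
            rw [← map_mul, hc, map_one]
          have h' : ((f χ : ℂ)) * (f χ⁻¹ : ℂ) = 1 := by
            rw [← Units.val_mul, h1, Units.val_one]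
          rw [h', one_smul]
        · rw [scaleVars_X_mul_X_mul_X]
          have h1 : f χ₁ * f χ₂ * f (χ₁ * χ₂)⁻¹ = 1 := by
            have hc : χ₁ * χ₂ * (χ₁ * χ₂)⁻¹ = 1 := mul_inv_cancel (χ₁ * χ₂)
            rw [← map_mul, ← map_mul, hc, map_one]
          have h' : ((f χ₁ : ℂ)) * (f χ₂ : ℂ) * (f (χ₁ * χ₂)⁻¹ : ℂ) = 1 := by
            rw [← Units.val_mul, ← Units.val_mul, h1, Units.val_one]
          rw [h', one_smul]⟩
      left_inv := fun ψ => Subtype.ext rfl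
      right_inv := fun f => MonoidHom.ext fun χ => rfl }
  rw [Nat.card_congr e]
  -- Now use duality for finite abelian groups, twice.
  haveI : NeZero ((Monoid.exponent G : ℂ)) :=
    ⟨by exact_mod_cast Monoid.exponent_ne_zero_of_finite⟩
  obtain ⟨e₁⟩ := CommGroup.monoidHom_mulEquiv_of_hasEnoughRootsOfUnity G ℂ
  haveI : Finite (G →* ℂˣ) := Finite.of_equiv G e₁.symm.toEquiv
  haveI : NeZero ((Monoid.exponent (G →* ℂˣ) : ℂ)) :=
    ⟨Nat.cast_ne_zero.mpr (Monoid.exponent_ne_zero_of_finite (G := G →* ℂˣ))⟩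
  obtain ⟨e₂⟩ := CommGroup.monoidHom_mulEquiv_of_hasEnoughRootsOfUnity (G →* ℂˣ) ℂ
  rw [Nat.card_congr e₂.toEquiv, Nat.card_congr e₁.toEquiv, Nat.card_eq_fintype_card]
end

section
/- Let G be a finite group of order r acting linearly on V = ℝ^p and let θ ∈ V be such that the vectors {g·θ : g ∈ G} are linearly independent. Then the symmetric third-order tensor T₃(θ) = (1/r) ∑_{g∈G} (g·θ)^{⊗3} determines the orbit of θ uniquely: if θ' ∈ V also has linearly independent orbit vectors and T₃(θ') = T₃(θ), then θ' = g·θ for some g ∈ G. -/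
open Finset

private lemma expand_cube {p : ℕ} {ι : Type*} [Fintype ι]
    (x : ι → Fin p → ℝ) (c1 c2 c3 : Fin p → ℝ) :
    ∑ g : ι, (∑ i, c1 i * x g i) * (∑ j, c2 j * x g j) * (∑ k, c3 k * x g k)
      = ∑ i, ∑ j, ∑ k, (c1 i * c2 j * c3 k) * ∑ g : ι, x g i * x g j * x g k := by
  have h : ∀ g : ι, (∑ i, c1 i * x g i) * (∑ j, c2 j * x g j) * (∑ k, c3 k * x g k)
      = ∑ i, ∑ j, ∑ k, (c1 i * c2 j * c3 k) * (x g i * x g j * x g k) := by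
    intro g
    rw [Finset.sum_mul_sum, Finset.sum_mul]
    refine Finset.sum_congr rfl fun i _ => ?_
    rw [Finset.sum_mul]
    refine Finset.sum_congr rfl fun j _ => ?_
    rw [Finset.mul_sum]
    refine Finset.sum_congr rfl fun k _ => ?_
    ring
  rw [Finset.sum_congr rfl fun g _ => h g, Finset.sum_comm]
  refine Finset.sum_congr rfl fun i _ => ?_
  rw [Finset.sum_comm]
  refine Finset.sum_congr rfl fun j _ => ?_
  rw [Finset.sum_comm]
  refine Finset.sum_congr rfl fun k _ => ?_
  rw [Finset.mul_sum]

private lemma exists_dual {p : ℕ} {ι : Type*} [Fintype ι] [DecidableEq ι]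
    {a : ι → Fin p → ℝ} (ha : LinearIndependent ℝ a) :
    ∃ c : ι → Fin p → ℝ, ∀ u g, (∑ i, c u i * a g i) = if u = g then 1 else 0 := by
  classical
  have hs : LinearIndepOn ℝ id (Set.range a) :=
    (linearIndepOn_id_range_iff ha.injective).mpr ha
  let B := Module.Basis.extend hs
  have hsub : Set.range a ⊆ hs.extend (Set.subset_univ _) := Module.Basis.subset_extend hs
  have hmem : ∀ u : ι, a u ∈ hs.extend (Set.subset_univ _) := fun u => hsub ⟨u, rfl⟩
  let f : ι → ((Fin p → ℝ) →ₗ[ℝ] ℝ) := fun u => B.coord ⟨a u, hmem u⟩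
  have hf : ∀ u g, f u (a g) = if u = g then 1 else 0 := by
    intro u g
    have hBg : (B ⟨a g, hmem g⟩ : Fin p → ℝ) = a g := Module.Basis.extend_apply_self hs _
    have : f u (a g) = B.coord ⟨a u, hmem u⟩ (B ⟨a g, hmem g⟩) := by rw [hBg]
    rw [this, Module.Basis.coord_apply, Module.Basis.repr_self, Finsupp.single_apply]
    have heq : (⟨a g, hmem g⟩ : hs.extend (Set.subset_univ _)) = ⟨a u, hmem u⟩ ↔ u = g := by
      constructor
      · intro h; exact (ha.injective (congrArg Subtype.val h)).symm
      · intro h; subst h; rfl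
    by_cases h : u = g
    · rw [if_pos (heq.mpr h), if_pos h]
    · rw [if_neg (fun hh => h (heq.mp hh)), if_neg h]
  refine ⟨fun u i => f u (fun j => if i = j then 1 else 0), fun u g => ?_⟩
  have h2 := LinearMap.pi_apply_eq_sum_univ (f u) (a g)
  rw [← hf u g, h2]
  exact Finset.sum_congr rfl fun i _ => by rw [smul_eq_mul, mul_comm]

private lemma sel {p : ℕ} (x : Fin p → ℝ) (k : Fin p) :
    (∑ j, (if j = k then (1:ℝ) else 0) * x j) = x k := by
  rw [Finset.sum_eq_single k]
  · simp
  · intro j _ hj; rw [if_neg hj, zero_mul]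
  · intro h; exact absurd (Finset.mem_univ k) h

/-- **The third moment tensor determines the orbit.**
Let a finite group `G` act linearly on `ℝ^p` via a representation `ρ`, and let
`θ ∈ ℝ^p` be such that the orbit vectors `{ρ(g) θ : g ∈ G}` are linearly
independent.  If `θ'` also has linearly independent orbit vectors and the
symmetric third-order moment tensors `T₃(θ) = (1/|G|) ∑_g (ρ(g) θ)^{⊗3}` agree,
then `θ' = ρ(g) θ` for some `g ∈ G`. -/
theorem third_moment_determines_orbit {G : Type*} [Group G] [Fintype G] {p : ℕ}
    (ρ : G →* (Fin p → ℝ) ≃ₗ[ℝ] (Fin p → ℝ)) (θ θ' : Fin p → ℝ)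
    (hθ : LinearIndependent ℝ (fun g : G => ρ g θ))
    (hθ' : LinearIndependent ℝ (fun g : G => ρ g θ'))
    (hT : ∀ i j k : Fin p,
      (1 / (Fintype.card G : ℝ)) * ∑ g : G, (ρ g θ) i * (ρ g θ) j * (ρ g θ) k =
      (1 / (Fintype.card G : ℝ)) * ∑ g : G, (ρ g θ') i * (ρ g θ') j * (ρ g θ') k) :
    ∃ g : G, ρ g θ = θ' := by
  classical
  set a : G → Fin p → ℝ := fun g => ρ g θ with ha_def
  set b : G → Fin p → ℝ := fun g => ρ g θ' with hb_def
  have ha : LinearIndependent ℝ a := hθ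
  have hb : LinearIndependent ℝ b := hθ'
  have hcard : (Fintype.card G : ℝ) ≠ 0 :=
    Nat.cast_ne_zero.mpr Fintype.card_ne_zero
  have hT' : ∀ i j k : Fin p,
      ∑ g : G, a g i * a g j * a g k = ∑ g : G, b g i * b g j * b g k := by
    intro i j k
    simp only [ha_def, hb_def]
    exact mul_left_cancel₀ (one_div_ne_zero hcard) (hT i j k)
  have key : ∀ c1 c2 c3 : Fin p → ℝ,
      ∑ g : G, (∑ i, c1 i * a g i) * (∑ j, c2 j * a g j) * (∑ k, c3 k * a g k)
      = ∑ g : G, (∑ i, c1 i * b g i) * (∑ j, c2 j * b g j) * (∑ k, c3 k * b g k) := by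
    intro c1 c2 c3
    rw [expand_cube, expand_cube]
    refine Finset.sum_congr rfl fun i _ => Finset.sum_congr rfl fun j _ =>
      Finset.sum_congr rfl fun k _ => ?_
    rw [hT' i j k]
  obtain ⟨c, hc⟩ := exists_dual ha
  obtain ⟨d, hd⟩ := exists_dual hb
  set M : G → G → ℝ := fun g u => ∑ i, c u i * b g i with hM_def
  have hM : ∀ g u, M g u = ∑ i, c u i * b g i := fun _ _ => rfl
  -- b g k = ∑ h, (∑ i, d g i * a h i)^2 * a h k
  have hbspan : ∀ g k, b g k = ∑ h, (∑ i, d g i * a h i)^2 * a h k := by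
    intro g k
    have h1 := key (d g) (d g) (fun j => if j = k then 1 else 0)
    simp only [sel, hd] at h1
    have h2 : ∑ h, (if g = h then (1:ℝ) else 0) * (if g = h then 1 else 0) * b h k
        = b g k := by
      rw [Finset.sum_eq_single g (fun h _ hh => by rw [if_neg (Ne.symm hh)]; ring)
        (fun hh => absurd (Finset.mem_univ g) hh), if_pos rfl]
      ring
    rw [h2] at h1
    rw [← h1]
    exact Finset.sum_congr rfl fun h _ => by ring
  -- a u k = ∑ h, (M h u)^2 * b h k
  have haspan : ∀ u k, a u k = ∑ h, (M h u)^2 * b h k := by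
    intro u k
    have h1 := key (c u) (c u) (fun j => if j = k then 1 else 0)
    simp only [sel, hc] at h1
    have h2 : ∑ h, (if u = h then (1:ℝ) else 0) * (if u = h then 1 else 0) * a h k
        = a u k := by
      rw [Finset.sum_eq_single u (fun h _ hh => by rw [if_neg (Ne.symm hh)]; ring)
        (fun hh => absurd (Finset.mem_univ u) hh), if_pos rfl]
      ring
    rw [h2] at h1
    rw [h1]
    exact Finset.sum_congr rfl fun h _ => by rw [hM h u]; ring
  -- M coefficients
  have hMcoef : ∀ g u, M g u = (∑ i, d g i * a u i)^2 := by
    intro g u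
    have e1 : M g u = ∑ i, c u i * (∑ h, (∑ i', d g i' * a h i')^2 * a h i) := by
      rw [hM g u]
      exact Finset.sum_congr rfl fun i _ => by rw [← hbspan g i]
    rw [e1]
    have e2 : ∑ i, c u i * (∑ h, (∑ i', d g i' * a h i')^2 * a h i)
        = ∑ h, (∑ i', d g i' * a h i')^2 * (∑ i, c u i * a h i) := by
      rw [show (∑ i, c u i * ∑ h, (∑ i', d g i' * a h i')^2 * a h i)
          = ∑ i, ∑ h, c u i * ((∑ i', d g i' * a h i')^2 * a h i) from
        Finset.sum_congr rfl fun i _ => Finset.mul_sum _ _ _]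
      rw [Finset.sum_comm]
      refine Finset.sum_congr rfl fun h _ => ?_
      rw [Finset.mul_sum]
      exact Finset.sum_congr rfl fun i _ => by ring
    rw [e2]
    simp only [hc]
    rw [Finset.sum_eq_single u (fun h _ hh => by rw [if_neg (Ne.symm hh), mul_zero])
      (fun hh => absurd (Finset.mem_univ u) hh), if_pos rfl, mul_one]
  -- b g in terms of a
  have hMrep : ∀ g k, b g k = ∑ u, M g u * a u k := by
    intro g k
    rw [hbspan g k]
    exact Finset.sum_congr rfl fun u _ => by rw [hMcoef g u]
  -- M * N = 1 with N u h = (M h u)^2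
  have hMN : ∀ g h : G, (∑ u, M g u * (M h u)^2) = if g = h then 1 else 0 := by
    intro g h
    have expand : ∀ k, b g k = ∑ h', (∑ u, M g u * (M h' u)^2) * b h' k := by
      intro k
      rw [hMrep g k]
      have e1 : ∀ u, M g u * a u k = ∑ h', M g u * ((M h' u)^2 * b h' k) := by
        intro u
        rw [← Finset.mul_sum, ← haspan u k]
      rw [Finset.sum_congr rfl fun u _ => e1 u, Finset.sum_comm]
      refine Finset.sum_congr rfl fun h' _ => ?_
      rw [Finset.sum_mul]
      exact Finset.sum_congr rfl fun u _ => by ring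
    have hzero : ∑ h', ((∑ u, M g u * (M h' u)^2) - (if g = h' then 1 else 0)) • b h' = 0 := by
      funext k
      simp only [Finset.sum_apply, Pi.smul_apply, smul_eq_mul, Pi.zero_apply]
      have e1 : ∑ h', ((∑ u, M g u * (M h' u)^2) - (if g = h' then 1 else 0)) * b h' k
          = (∑ h', (∑ u, M g u * (M h' u)^2) * b h' k)
            - ∑ h', (if g = h' then 1 else 0) * b h' k := by
        rw [← Finset.sum_sub_distrib]
        exact Finset.sum_congr rfl fun h' _ => by ring
      rw [e1, ← expand k]
      rw [Finset.sum_eq_single g (fun h' _ hh => by rw [if_neg (Ne.symm hh), zero_mul])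
        (fun hh => absurd (Finset.mem_univ g) hh), if_pos rfl, one_mul, sub_self]
    have h3 := (Fintype.linearIndependent_iff.mp hb) _ hzero h
    have h4 : (∑ u, M g u * (M h u)^2) - (if g = h then 1 else 0) = 0 := h3
    linarith
  -- triple identity
  have triple : ∀ u v w : G, (∑ g, M g u * M g v * M g w)
      = if u = v ∧ v = w then 1 else 0 := by
    intro u v w
    have h1 := key (c u) (c v) (c w)
    simp only [hc] at h1
    simp only [hM]
    rw [← h1]
    rw [Finset.sum_eq_single u (fun g _ hg => by rw [if_neg (Ne.symm hg)]; ring)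
      (fun hh => absurd (Finset.mem_univ u) hh), if_pos rfl]
    by_cases hv : v = u
    · by_cases hw : w = u
      · rw [if_pos hv, if_pos hw, if_pos ⟨hv.symm, hv.trans hw.symm⟩]; norm_num
      · rw [if_pos hv, if_neg hw, if_neg (fun hh : u = v ∧ v = w => hw (hh.2.symm.trans hv))]
        ring
    · rw [if_neg hv, if_neg (fun hh : u = v ∧ v = w => hv hh.1.symm)]; ring
  -- each row of M has at most one nonzero entry
  have hz : ∀ g u v, u ≠ v → M g u * M g v = 0 := by
    intro g u v huv
    have hq : ∀ w, ∑ g', M g' u * M g' v * M g' w = 0 := by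
      intro w
      rw [triple u v w, if_neg (fun hh => huv hh.1)]
    have e1 : M g u * M g v = ∑ g', M g' u * M g' v * (if g' = g then 1 else 0) := by
      rw [Finset.sum_eq_single g (fun g' _ hg => by rw [if_neg hg, mul_zero])
        (fun hh => absurd (Finset.mem_univ g) hh), if_pos rfl, mul_one]
    rw [e1]
    have e2 : ∀ g', M g' u * M g' v * (if g' = g then 1 else 0)
        = ∑ w, (M g' u * M g' v * M g' w) * (M g w)^2 := by
      intro g'
      rw [← hMN g' g, Finset.mul_sum]
      exact Finset.sum_congr rfl fun w _ => by ring
    rw [Finset.sum_congr rfl fun g' _ => e2 g', Finset.sum_comm]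
    rw [Finset.sum_congr rfl fun w _ => by rw [← Finset.sum_mul, hq w, zero_mul]]
    exact Finset.sum_const_zero
  -- find the nonzero entry in row 1
  have h1 : (∑ u, M 1 u * (M 1 u)^2) = 1 := by
    rw [hMN 1 1, if_pos rfl]
  obtain ⟨u0, -, hne⟩ : ∃ u ∈ Finset.univ, M 1 u * (M 1 u)^2 ≠ 0 :=
    Finset.exists_ne_zero_of_sum_ne_zero (by rw [h1]; exact one_ne_zero)
  have hM10 : M 1 u0 ≠ 0 := fun h => hne (by rw [h]; ring)
  have hrow1 : ∀ v, v ≠ u0 → M 1 v = 0 := fun v hv =>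
    (mul_eq_zero.mp (hz 1 u0 v (Ne.symm hv))).resolve_left hM10
  -- column u0 has its only nonzero entry in row 1
  have hcol : ∀ g, g ≠ 1 → M g u0 = 0 := by
    intro g hg
    by_contra hgz
    have hrowg : ∀ v, v ≠ u0 → M g v = 0 := fun v hv =>
      (mul_eq_zero.mp (hz g u0 v (Ne.symm hv))).resolve_left hgz
    have h2 := hMN g 1
    rw [if_neg hg, Finset.sum_eq_single u0 (fun v _ hv => by rw [hrowg v hv, zero_mul])
      (fun hh => absurd (Finset.mem_univ u0) hh)] at h2
    have h3 := hMN 1 1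
    rw [if_pos rfl, Finset.sum_eq_single u0 (fun v _ hv => by rw [hrow1 v hv, zero_mul])
      (fun hh => absurd (Finset.mem_univ u0) hh)] at h3
    have h4 : (M 1 u0)^2 ≠ 0 := pow_ne_zero _ hM10
    exact hgz ((mul_eq_zero.mp h2).resolve_right h4)
  -- M 1 u0 = 1
  have hdiag : M 1 u0 * M 1 u0 * M 1 u0 = 1 := by
    have h3 := triple u0 u0 u0
    rw [if_pos ⟨rfl, rfl⟩, Finset.sum_eq_single 1 (fun g _ hg => by rw [hcol g hg]; ring)
      (fun hh => absurd (Finset.mem_univ (1:G)) hh)] at h3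
    exact h3
  have hM1 : M 1 u0 = 1 := by nlinarith [sq_nonneg (M 1 u0 - 1), sq_nonneg (M 1 u0 + 1)]
  -- conclude
  have hb1 : b 1 = θ' := by
    simp only [hb_def, map_one]
    rfl
  have hfinal : a u0 = θ' := by
    funext k
    rw [← hb1]
    rw [hMrep 1 k, Finset.sum_eq_single u0 (fun v _ hv => by rw [hrow1 v hv, zero_mul])
      (fun hh => absurd (Finset.mem_univ u0) hh), hM1, one_mul]
  exact ⟨u0, by simpa [ha_def] using hfinal⟩
end
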